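/- Let d > 1 and let F ∈ ℂ[x_0,…,x_n], G ∈ ℂ[y_0,…,y_m] be non-zero degree-d forms with rk(F) = r, rk(G) = s, and minimal decompositions F = F_1^d + ⋯ + F_r^d, G = G_1^d + ⋯ + G_s^d. Suppose F + G = H_1^d + ⋯ + H_t^d with t < r + s, where the H_i are pairwise non-proportional linear forms none of which lies in ℂ[x_0,…,x_n] or ℂ[y_0,…,y_m]. Then the finite set Z = Z(F) ∪ Z(G) ∪ Z(H) of points of ℙ^{n+m+1} determined by the classes [F_i], [G_j], [H_k] does not impose independent conditions on degree-d forms. -/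

import Mathlib

open MvPolynomial

/-- The Waring rank of a form `P` of degree `d`: the least `r` such that
`P = L₁^d + ⋯ + L_r^d` for some linear forms `L i`. -/
noncomputable def waringRank {σ : Type*} (d : ℕ) (P : MvPolynomial σ ℂ) : ℕ :=
  sInf {r : ℕ | ∃ L : Fin r → MvPolynomial σ ℂ,
    (∀ i, (L i).IsHomogeneous 1) ∧ P = ∑ i, (L i) ^ d}

/-- The coefficient vector of (the linear part of) a polynomial: a nonzero linear form
`L` determines via `coeffVec L` the homogeneous coordinates of the point `[L]`. -/
noncomputable def coeffVec {σ : Type*} (L : MvPolynomial σ ℂ) : σ → ℂ :=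
  fun j => MvPolynomial.coeff (Finsupp.single j 1) L

/-- A finite set `Z` of points of projective space imposes independent conditions on
degree-`i` forms: for each `p ∈ Z` there is a degree-`i` form vanishing on `Z \ {p}`
but not at `p`. -/
def ImposesIndepConditions {σ : Type*} (i : ℕ)
    (Z : Set (Projectivization ℂ (σ → ℂ))) : Prop :=
  ∀ p ∈ Z, ∃ Q : MvPolynomial σ ℂ, Q.IsHomogeneous i ∧
    (∀ q ∈ Z, q ≠ p → MvPolynomial.eval q.rep Q = 0) ∧
    MvPolynomial.eval p.rep Q ≠ 0

set_option linter.unusedSectionVars false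
set_option linter.unusedVariables false

namespace Stmt6Aux

open Finset

variable {σ : Type*}

noncomputable def T (Q P : MvPolynomial σ ℂ) : ℂ :=
  ∑ α ∈ P.support, Q.coeff α * P.coeff α * ∏ j ∈ α.support, ((α j).factorial : ℂ)

lemma T_eq_on (Q P : MvPolynomial σ ℂ) {S : Finset (σ →₀ ℕ)} (h : P.support ⊆ S) :
    T Q P = ∑ α ∈ S, Q.coeff α * P.coeff α * ∏ j ∈ α.support, ((α j).factorial : ℂ) :=
  Finset.sum_subset h (fun α _ hα => by
    rw [MvPolynomial.notMem_support_iff.mp hα]; ring)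

lemma T_add (Q P₁ P₂ : MvPolynomial σ ℂ) : T Q (P₁ + P₂) = T Q P₁ + T Q P₂ := by
  classical
  rw [T_eq_on Q P₁ (Finset.subset_union_left : P₁.support ⊆ P₁.support ∪ P₂.support),
      T_eq_on Q P₂ (Finset.subset_union_right : P₂.support ⊆ P₁.support ∪ P₂.support),
      T_eq_on Q (P₁ + P₂) MvPolynomial.support_add, ← Finset.sum_add_distrib]
  exact Finset.sum_congr rfl fun α _ => by rw [MvPolynomial.coeff_add]; ring

lemma T_zero (Q : MvPolynomial σ ℂ) : T Q 0 = 0 := by simp [T]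

lemma T_sum (Q : MvPolynomial σ ℂ) {ι : Type*} (s : Finset ι) (P : ι → MvPolynomial σ ℂ) :
    T Q (∑ i ∈ s, P i) = ∑ i ∈ s, T Q (P i) := by
  classical
  induction s using Finset.cons_induction with
  | empty => simpa using T_zero Q
  | cons a s ha ih => rw [Finset.sum_cons, Finset.sum_cons, T_add, ih]

lemma T_monomial (Q : MvPolynomial σ ℂ) (α : σ →₀ ℕ) (c : ℂ) :
    T Q (monomial α c) = Q.coeff α * c * ∏ j ∈ α.support, ((α j).factorial : ℂ) := by
  classical
  rw [T_eq_on Q _ (MvPolynomial.support_monomial_subset (s := α) (a := c)), Finset.sum_singleton,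
    MvPolynomial.coeff_monomial, if_pos rfl]

lemma degree_eq_one {β : σ →₀ ℕ} (h : β.degree = 1) : ∃ j, β = Finsupp.single j 1 := by
  classical
  have hβ : β ≠ 0 := by
    intro h0
    rw [h0, map_zero] at h
    omega
  obtain ⟨j, hj⟩ := Finsupp.support_nonempty_iff.mpr hβ
  have hdeg : β.degree = ∑ i ∈ β.support, β i := rfl
  refine ⟨j, ?_⟩
  ext i
  rcases eq_or_ne i j with rfl | hij
  · have hle : β i ≤ 1 := by
      rw [← h, hdeg]
      exact Finset.single_le_sum (fun _ _ => Nat.zero_le _) hj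
    have h1 : β i ≠ 0 := Finsupp.mem_support_iff.mp hj
    rw [Finsupp.single_eq_same]
    omega
  · rw [Finsupp.single_eq_of_ne' (Ne.symm hij)]
    by_contra hne
    have hi : i ∈ β.support := Finsupp.mem_support_iff.mpr hne
    have hjne : β j ≠ 0 := Finsupp.mem_support_iff.mp hj
    have hsub : ({i, j} : Finset σ) ⊆ β.support := by
      intro x hx
      rcases Finset.mem_insert.mp hx with rfl | hx
      · exact hi
      · rw [Finset.mem_singleton.mp hx]; exact hj
    have h2 : 2 ≤ β.degree := by
      calc 2 ≤ β i + β j := by omega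
        _ = ∑ x ∈ ({i, j} : Finset σ), β x := (Finset.sum_pair hij).symm
        _ ≤ ∑ x ∈ β.support, β x := Finset.sum_le_sum_of_subset hsub
        _ = β.degree := hdeg.symm
    omega

variable [Fintype σ] [DecidableEq σ]

lemma sum_univ_eq_degree (α : σ →₀ ℕ) : ∑ j, α j = α.degree :=
  (Finset.sum_subset (Finset.subset_univ _)
    (fun x _ hx => Finsupp.notMem_support_iff.mp hx)).symm

lemma linear_eq (L : MvPolynomial σ ℂ) (hL : L.IsHomogeneous 1) :
    L = ∑ j, C (coeffVec L j) * X j := by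
  ext β
  rw [coeff_sum]
  simp only [coeff_C_mul, coeff_X']
  by_cases hβ : β.degree = 1
  · obtain ⟨j, rfl⟩ := degree_eq_one hβ
    rw [Finset.sum_eq_single j (fun i _ hij => ?_) (fun h => absurd (Finset.mem_univ j) h)]
    · rw [if_pos rfl, mul_one]; rfl
    · rw [if_neg, mul_zero]
      exact fun hc => hij (Finsupp.single_left_injective one_ne_zero hc)
  · rw [hL.coeff_eq_zero hβ]
    refine (Finset.sum_eq_zero fun i _ => ?_).symm
    rw [if_neg, mul_zero]
    intro hc
    apply hβ
    rw [← hc, Finsupp.degree_apply, Finsupp.support_single_ne_zero _ one_ne_zero,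
      Finset.sum_singleton, Finsupp.single_eq_same]

lemma coeffVec_smul (c : ℂ) (L : MvPolynomial σ ℂ) : coeffVec (c • L) = c • coeffVec L := by
  funext j
  simp [coeffVec, MvPolynomial.coeff_smul]

lemma coeffVec_ne_zero {L : MvPolynomial σ ℂ} (hL : L.IsHomogeneous 1) (h0 : L ≠ 0) :
    coeffVec L ≠ 0 := by
  intro h
  apply h0
  have := linear_eq L hL
  rw [h] at this
  simpa using this

lemma eq_smul_of_coeffVec_eq {L₁ L₂ : MvPolynomial σ ℂ} (h₁ : L₁.IsHomogeneous 1)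
    (h₂ : L₂.IsHomogeneous 1) {μ : ℂ} (h : coeffVec L₁ = μ • coeffVec L₂) : L₁ = μ • L₂ := by
  rw [linear_eq L₁ h₁, linear_eq L₂ h₂, h, Finset.smul_sum]
  refine Finset.sum_congr rfl fun j _ => ?_
  rw [Pi.smul_apply, smul_eq_mul, MvPolynomial.smul_eq_C_mul, C_mul, mul_assoc]

lemma eval_smul_of_homog {Q : MvPolynomial σ ℂ} {d : ℕ} (hQ : Q.IsHomogeneous d)
    (a : ℂ) (x : σ → ℂ) : eval (a • x) Q = a ^ d * eval x Q := by
  rw [eval_eq', eval_eq', Finset.mul_sum]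
  refine Finset.sum_congr rfl fun α hα => ?_
  have hdeg : α.degree = d := by
    by_contra hne
    exact (MvPolynomial.mem_support_iff.mp hα) (hQ.coeff_eq_zero hne)
  have : ∏ j, (a • x) j ^ α j = a ^ d * ∏ j, x j ^ α j := by
    simp_rw [Pi.smul_apply, smul_eq_mul, mul_pow]
    rw [Finset.prod_mul_distrib, Finset.prod_pow_eq_pow_sum, sum_univ_eq_degree, hdeg]
  rw [this]; ring

lemma T_pow (Q L : MvPolynomial σ ℂ) {d : ℕ} (hQ : Q.IsHomogeneous d) (hL : L.IsHomogeneous 1) :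
    T Q (L ^ d) = (d.factorial : ℂ) * eval (coeffVec L) Q := by
  classical
  set c := coeffVec L with hc
  have hexp : L ^ d = ∑ k ∈ Finset.piAntidiag Finset.univ d,
      monomial (Finsupp.equivFunOnFinite.symm k)
        ((Nat.multinomial Finset.univ k : ℂ) * ∏ j, c j ^ k j) := by
    conv_lhs => rw [linear_eq L hL]
    rw [Finset.sum_pow_eq_sum_piAntidiag]
    refine Finset.sum_congr rfl fun k hk => ?_
    have hα : ⇑(Finsupp.equivFunOnFinite.symm k) = k := rfl
    have hmono : (∏ j, X j ^ k j : MvPolynomial σ ℂ)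
        = monomial (Finsupp.equivFunOnFinite.symm k) 1 := by
      rw [← prod_X_pow_eq_monomial]
      refine (Finset.prod_subset (Finset.subset_univ _) fun x _ hx => ?_).symm
      have : k x = 0 := Finsupp.notMem_support_iff.mp hx
      simp [hα, this]
    have h1 : (∏ j, (C (c j) * X j) ^ k j : MvPolynomial σ ℂ)
        = C (∏ j, c j ^ k j) * ∏ j, X j ^ k j := by
      simp_rw [mul_pow, ← C_pow]
      rw [Finset.prod_mul_distrib, map_prod]
    rw [h1, hmono, C_mul_monomial]
    rw [show ((Nat.multinomial Finset.univ k : ℕ) : MvPolynomial σ ℂ)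
        = C ((Nat.multinomial Finset.univ k : ℕ) : ℂ) by rw [map_natCast]]
    rw [C_mul_monomial, mul_one]
  rw [hexp, T_sum]
  have hterm : ∀ k ∈ Finset.piAntidiag Finset.univ d,
      T Q (monomial (Finsupp.equivFunOnFinite.symm k)
        ((Nat.multinomial Finset.univ k : ℂ) * ∏ j, c j ^ k j))
      = (d.factorial : ℂ) * (Q.coeff (Finsupp.equivFunOnFinite.symm k) * ∏ j, c j ^ k j) := by
    intro k hk
    rw [T_monomial]
    have hα : ⇑(Finsupp.equivFunOnFinite.symm k) = k := rfl
    have hsupp : ∏ j ∈ (Finsupp.equivFunOnFinite.symm k).support,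
        (((Finsupp.equivFunOnFinite.symm k) j).factorial : ℂ)
        = ((∏ j, (k j).factorial : ℕ) : ℂ) := by
      push_cast
      refine Finset.prod_subset (Finset.subset_univ _) fun x _ hx => ?_
      have : k x = 0 := Finsupp.notMem_support_iff.mp hx
      simp [hα, this]
    have hsum : ∑ j, k j = d := ((Finset.mem_piAntidiag).mp hk).1
    have hfact : ((∏ j, (k j).factorial : ℕ) : ℂ) * (Nat.multinomial Finset.univ k : ℂ)
        = (d.factorial : ℂ) := by
      rw [← Nat.cast_mul, Nat.multinomial_spec, hsum]
    rw [hsupp]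
    calc Q.coeff (Finsupp.equivFunOnFinite.symm k)
          * ((Nat.multinomial Finset.univ k : ℂ) * ∏ j, c j ^ k j)
          * ((∏ j, (k j).factorial : ℕ) : ℂ)
        = ((∏ j, (k j).factorial : ℕ) : ℂ) * (Nat.multinomial Finset.univ k : ℂ)
          * (Q.coeff (Finsupp.equivFunOnFinite.symm k) * ∏ j, c j ^ k j) := by ring
      _ = _ := by rw [hfact]
  rw [Finset.sum_congr rfl hterm, ← Finset.mul_sum]
  congr 1
  rw [eval_eq']
  have hmap : ∑ k ∈ Finset.piAntidiag Finset.univ d,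
      Q.coeff (Finsupp.equivFunOnFinite.symm k) * ∏ j, c j ^ k j
      = ∑ α ∈ (Finset.piAntidiag Finset.univ d).map
          ⟨Finsupp.equivFunOnFinite.symm, Finsupp.equivFunOnFinite.symm.injective⟩,
        Q.coeff α * ∏ j, c j ^ α j := by
    rw [Finset.sum_map]
    rfl
  rw [hmap]
  refine (Finset.sum_subset ?_ fun α _ hα => ?_).symm
  · intro α hαs
    rw [Finset.mem_map]
    refine ⟨⇑α, ?_, Finsupp.equivFunOnFinite_symm_coe α⟩
    rw [Finset.mem_piAntidiag]
    have hdeg : α.degree = d := by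
      by_contra hne
      exact (MvPolynomial.mem_support_iff.mp hαs) (hQ.coeff_eq_zero hne)
    exact ⟨by rw [sum_univ_eq_degree, hdeg], fun _ _ => Finset.mem_univ _⟩
  · rw [MvPolynomial.notMem_support_iff.mp hα, zero_mul]

end Stmt6Aux

/-- If `F + G` admits a too-short Waring decomposition `∑ Hₖ^d`, then the set
`Z = Z(F) ∪ Z(G) ∪ Z(H)` of projective points determined by the linear forms of the
minimal decompositions of `F`, `G` and by the `Hₖ` does not impose independent
conditions on degree-`d` forms. -/

theorem stmt6 (n m d r s t : ℕ) (hd : 1 < d)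
    (F : MvPolynomial (Fin (n + 1)) ℂ) (G : MvPolynomial (Fin (m + 1)) ℂ)
    (hF0 : F ≠ 0) (hG0 : G ≠ 0)
    (hF : F.IsHomogeneous d) (hG : G.IsHomogeneous d)
    (hr : waringRank d F = r) (hs : waringRank d G = s)
    (Fc : Fin r → MvPolynomial (Fin (n + 1)) ℂ)
    (hFc1 : ∀ i, (Fc i).IsHomogeneous 1) (hFdec : F = ∑ i, (Fc i) ^ d)
    (Gc : Fin s → MvPolynomial (Fin (m + 1)) ℂ)
    (hGc1 : ∀ j, (Gc j).IsHomogeneous 1) (hGdec : G = ∑ j, (Gc j) ^ d)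
    (H : Fin t → MvPolynomial (Fin (n + 1) ⊕ Fin (m + 1)) ℂ)
    (hH1 : ∀ k, (H k).IsHomogeneous 1)
    (ht : t < r + s)
    (hHprop : ∀ k l, k ≠ l → ¬ ∃ c : ℂ, H k = c • H l)
    (hHx : ∀ k, H k ∉
      (rename (Sum.inl : Fin (n + 1) → Fin (n + 1) ⊕ Fin (m + 1)) :
        MvPolynomial (Fin (n + 1)) ℂ →ₐ[ℂ]
          MvPolynomial (Fin (n + 1) ⊕ Fin (m + 1)) ℂ).range)
    (hHy : ∀ k, H k ∉
      (rename (Sum.inr : Fin (m + 1) → Fin (n + 1) ⊕ Fin (m + 1)) :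
        MvPolynomial (Fin (m + 1)) ℂ →ₐ[ℂ]
          MvPolynomial (Fin (n + 1) ⊕ Fin (m + 1)) ℂ).range)
    (hsum : rename (Sum.inl : Fin (n + 1) → Fin (n + 1) ⊕ Fin (m + 1)) F +
        rename (Sum.inr : Fin (m + 1) → Fin (n + 1) ⊕ Fin (m + 1)) G =
      ∑ k, (H k) ^ d) :
    ¬ ImposesIndepConditions d
      {p : Projectivization ℂ ((Fin (n + 1) ⊕ Fin (m + 1)) → ℂ) |
        (∃ i, p.submodule = Submodule.span ℂ
          {coeffVec (rename (Sum.inl : Fin (n + 1) → Fin (n + 1) ⊕ Fin (m + 1)) (Fc i))}) ∨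
        (∃ j, p.submodule = Submodule.span ℂ
          {coeffVec (rename (Sum.inr : Fin (m + 1) → Fin (n + 1) ⊕ Fin (m + 1)) (Gc j))}) ∨
        (∃ k, p.submodule = Submodule.span ℂ {coeffVec (H k)})} := by
  classical
  intro hind
  open Stmt6Aux in
  rcases Nat.eq_zero_or_pos t with ht0 | htpos
  · -- t = 0 : then F = 0, contradiction
    subst ht0
    apply hF0
    simp only [Finset.univ_eq_empty, Finset.sum_empty] at hsum
    have hh := congrArg
      (aeval (Sum.elim MvPolynomial.X fun _ => (0 : MvPolynomial (Fin (n + 1)) ℂ))) hsum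
    rw [map_add, map_zero, aeval_rename, aeval_rename, Sum.elim_comp_inl, Sum.elim_comp_inr] at hh
    have h1 : aeval (X : Fin (n+1) → MvPolynomial (Fin (n+1)) ℂ) F = F := by
      simp [aeval_X_left]
    have h2 : aeval (fun _ => (0 : MvPolynomial (Fin (n + 1)) ℂ) : Fin (m+1) → _) G = 0 := by
      rw [aeval_zero']
      have : constantCoeff G = 0 := by
        apply hG.coeff_eq_zero
        rw [map_zero]
        omega
      rw [this, map_zero]
    rw [h1, h2, add_zero] at hh
    exact hh
  · set k0 : Fin t := ⟨0, htpos⟩ with hk0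
    have hH0ne : ∀ k, H k ≠ 0 := by
      intro k hk
      exact hHx k ⟨0, by rw [map_zero, hk]⟩
    have hcH : ∀ k, coeffVec (H k) ≠ 0 := fun k => coeffVec_ne_zero (hH1 k) (hH0ne k)
    set p := Projectivization.mk ℂ (coeffVec (H k0)) (hcH k0) with hp
    have hpZ : p ∈ {p : Projectivization ℂ ((Fin (n + 1) ⊕ Fin (m + 1)) → ℂ) |
        (∃ i, p.submodule = Submodule.span ℂ
          {coeffVec (rename (Sum.inl : Fin (n + 1) → Fin (n + 1) ⊕ Fin (m + 1)) (Fc i))}) ∨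
        (∃ j, p.submodule = Submodule.span ℂ
          {coeffVec (rename (Sum.inr : Fin (m + 1) → Fin (n + 1) ⊕ Fin (m + 1)) (Gc j))}) ∨
        (∃ k, p.submodule = Submodule.span ℂ {coeffVec (H k)})} :=
      Or.inr (Or.inr ⟨k0, Projectivization.submodule_mk _ _⟩)
    obtain ⟨Q, hQh, hQ0, hQp⟩ := hind p hpZ
    -- relating eval at a vector and at the representative of its projective point
    have hrep : ∀ (v : (Fin (n + 1) ⊕ Fin (m + 1)) → ℂ) (hv : v ≠ 0), ∃ a : ℂ, a ≠ 0 ∧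
        eval v Q = a ^ d * eval (Projectivization.mk ℂ v hv).rep Q := by
      intro v hv
      have h1 : (Submodule.span ℂ {(Projectivization.mk ℂ v hv).rep}) = Submodule.span ℂ {v} := by
        rw [← Projectivization.submodule_eq, Projectivization.submodule_mk]
      obtain ⟨u, hu⟩ := Submodule.span_singleton_eq_span_singleton.mp h1
      refine ⟨(u : ℂ), u.ne_zero, ?_⟩
      conv_lhs => rw [← hu]
      rw [Units.smul_def, eval_smul_of_homog hQh]
    -- the F-terms vanish
    have hFterm : ∀ i : Fin r, T Q ((rename (Sum.inl : Fin (n+1) → Fin (n+1) ⊕ Fin (m+1)) (Fc i)) ^ d) = 0 := by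
      intro i
      by_cases h0 : Fc i = 0
      · rw [h0, map_zero, zero_pow (by omega), T_zero]
      · have hhom : (rename (Sum.inl : Fin (n+1) → Fin (n+1) ⊕ Fin (m+1)) (Fc i)).IsHomogeneous 1 :=
          (hFc1 i).rename_isHomogeneous
        have hne : rename (Sum.inl : Fin (n+1) → Fin (n+1) ⊕ Fin (m+1)) (Fc i) ≠ 0 := by
          intro hc
          exact h0 (MvPolynomial.rename_injective _ Sum.inl_injective (by rw [hc, map_zero]))
        have hv := coeffVec_ne_zero hhom hne
        have hqZ : Projectivization.mk ℂ _ hv ∈ {p : Projectivization ℂ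
            ((Fin (n + 1) ⊕ Fin (m + 1)) → ℂ) |
            (∃ i, p.submodule = Submodule.span ℂ
              {coeffVec (rename (Sum.inl : Fin (n + 1) → Fin (n + 1) ⊕ Fin (m + 1)) (Fc i))}) ∨
            (∃ j, p.submodule = Submodule.span ℂ
              {coeffVec (rename (Sum.inr : Fin (m + 1) → Fin (n + 1) ⊕ Fin (m + 1)) (Gc j))}) ∨
            (∃ k, p.submodule = Submodule.span ℂ {coeffVec (H k)})} :=
          Or.inl ⟨i, Projectivization.submodule_mk _ _⟩
        have hqp : Projectivization.mk ℂ _ hv ≠ p := by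
          intro he
          have hsub := congrArg Projectivization.submodule he
          rw [hp, Projectivization.submodule_mk, Projectivization.submodule_mk] at hsub
          obtain ⟨u, hu⟩ := Submodule.span_singleton_eq_span_singleton.mp hsub
          have hH0eq : H k0 = (u : ℂ) • rename (Sum.inl : Fin (n+1) → Fin (n+1) ⊕ Fin (m+1)) (Fc i) :=
            eq_smul_of_coeffVec_eq (hH1 k0) hhom
              (by rw [← hu, Units.smul_def])
          exact hHx k0 ((AlgHom.mem_range _).mpr ⟨(u : ℂ) • Fc i, by rw [map_smul]; exact hH0eq.symm⟩)
        have hz := hQ0 _ hqZ hqp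
        obtain ⟨a, ha, hav⟩ := hrep _ hv
        rw [T_pow Q _ hQh hhom, hav, hz]
        ring
    -- the G-terms vanish
    have hGterm : ∀ j : Fin s, T Q ((rename (Sum.inr : Fin (m+1) → Fin (n+1) ⊕ Fin (m+1)) (Gc j)) ^ d) = 0 := by
      intro j
      by_cases h0 : Gc j = 0
      · rw [h0, map_zero, zero_pow (by omega), T_zero]
      · have hhom : (rename (Sum.inr : Fin (m+1) → Fin (n+1) ⊕ Fin (m+1)) (Gc j)).IsHomogeneous 1 :=
          (hGc1 j).rename_isHomogeneous
        have hne : rename (Sum.inr : Fin (m+1) → Fin (n+1) ⊕ Fin (m+1)) (Gc j) ≠ 0 := by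
          intro hc
          exact h0 (MvPolynomial.rename_injective _ Sum.inr_injective (by rw [hc, map_zero]))
        have hv := coeffVec_ne_zero hhom hne
        have hqZ : Projectivization.mk ℂ _ hv ∈ {p : Projectivization ℂ
            ((Fin (n + 1) ⊕ Fin (m + 1)) → ℂ) |
            (∃ i, p.submodule = Submodule.span ℂ
              {coeffVec (rename (Sum.inl : Fin (n + 1) → Fin (n + 1) ⊕ Fin (m + 1)) (Fc i))}) ∨
            (∃ j, p.submodule = Submodule.span ℂ
              {coeffVec (rename (Sum.inr : Fin (m + 1) → Fin (n + 1) ⊕ Fin (m + 1)) (Gc j))}) ∨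
            (∃ k, p.submodule = Submodule.span ℂ {coeffVec (H k)})} :=
          Or.inr (Or.inl ⟨j, Projectivization.submodule_mk _ _⟩)
        have hqp : Projectivization.mk ℂ _ hv ≠ p := by
          intro he
          have hsub := congrArg Projectivization.submodule he
          rw [hp, Projectivization.submodule_mk, Projectivization.submodule_mk] at hsub
          obtain ⟨u, hu⟩ := Submodule.span_singleton_eq_span_singleton.mp hsub
          have hH0eq : H k0 = (u : ℂ) • rename (Sum.inr : Fin (m+1) → Fin (n+1) ⊕ Fin (m+1)) (Gc j) :=
            eq_smul_of_coeffVec_eq (hH1 k0) hhom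
              (by rw [← hu, Units.smul_def])
          exact hHy k0 ((AlgHom.mem_range _).mpr ⟨(u : ℂ) • Gc j, by rw [map_smul]; exact hH0eq.symm⟩)
        have hz := hQ0 _ hqZ hqp
        obtain ⟨a, ha, hav⟩ := hrep _ hv
        rw [T_pow Q _ hQh hhom, hav, hz]
        ring
    -- the H-terms for k ≠ k0 vanish
    have hHterm : ∀ k : Fin t, k ≠ k0 → T Q ((H k) ^ d) = 0 := by
      intro k hk
      have hv := hcH k
      have hqZ : Projectivization.mk ℂ _ hv ∈ {p : Projectivization ℂ
          ((Fin (n + 1) ⊕ Fin (m + 1)) → ℂ) |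
          (∃ i, p.submodule = Submodule.span ℂ
            {coeffVec (rename (Sum.inl : Fin (n + 1) → Fin (n + 1) ⊕ Fin (m + 1)) (Fc i))}) ∨
          (∃ j, p.submodule = Submodule.span ℂ
            {coeffVec (rename (Sum.inr : Fin (m + 1) → Fin (n + 1) ⊕ Fin (m + 1)) (Gc j))}) ∨
          (∃ k, p.submodule = Submodule.span ℂ {coeffVec (H k)})} :=
        Or.inr (Or.inr ⟨k, Projectivization.submodule_mk _ _⟩)
      have hqp : Projectivization.mk ℂ _ hv ≠ p := by
        intro he
        have hsub := congrArg Projectivization.submodule he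
        rw [hp, Projectivization.submodule_mk, Projectivization.submodule_mk] at hsub
        obtain ⟨u, hu⟩ := Submodule.span_singleton_eq_span_singleton.mp hsub
        have hH0eq : H k0 = (u : ℂ) • H k :=
          eq_smul_of_coeffVec_eq (hH1 k0) (hH1 k)
            (by rw [← hu, Units.smul_def])
        exact hHprop k0 k (Ne.symm hk) ⟨(u : ℂ), hH0eq⟩
      have hz := hQ0 _ hqZ hqp
      obtain ⟨a, ha, hav⟩ := hrep _ hv
      rw [T_pow Q _ hQh (hH1 k), hav, hz]
      ring
    -- now compare both sides of hsum under T Q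
    have hTsum := congrArg (T Q) hsum
    rw [T_add] at hTsum
    have hTF : T Q (rename (Sum.inl : Fin (n+1) → Fin (n+1) ⊕ Fin (m+1)) F) = 0 := by
      rw [hFdec, map_sum]
      simp_rw [map_pow]
      rw [T_sum]
      exact Finset.sum_eq_zero fun i _ => hFterm i
    have hTG : T Q (rename (Sum.inr : Fin (m+1) → Fin (n+1) ⊕ Fin (m+1)) G) = 0 := by
      rw [hGdec, map_sum]
      simp_rw [map_pow]
      rw [T_sum]
      exact Finset.sum_eq_zero fun j _ => hGterm j
    have hTH : T Q (∑ k, (H k) ^ d) = (d.factorial : ℂ) * eval (coeffVec (H k0)) Q := by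
      rw [T_sum, Finset.sum_eq_single k0 (fun k _ hk => hHterm k hk)
        (fun h => absurd (Finset.mem_univ k0) h)]
      exact T_pow Q _ hQh (hH1 k0)
    rw [hTF, hTG, hTH, add_zero] at hTsum
    have hne : (d.factorial : ℂ) * eval (coeffVec (H k0)) Q ≠ 0 := by
      obtain ⟨a, ha, hav⟩ := hrep _ (hcH k0)
      rw [hav]
      exact mul_ne_zero (Nat.cast_ne_zero.mpr d.factorial_ne_zero)
        (mul_ne_zero (pow_ne_zero _ ha) hQp)
    exact hne hTsum.symm
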